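/- Let k₁, k₂ be integers with 1 ≤ k₁, k₂ ≤ l − 1 and k₁ ≠ k₂. Then there exists an integer i ≥ 0 with m^{(k₁)} = g^i m^{(k₂)} (i.e., m^{(k₁)} and m^{(k₂)} are cyclic permutations of each other) if and only if k₂ = l − k₁. -/

import Mathlib

open Polynomial

/-- The tuple `μ ∈ (ℤ ± x)^f`:  `μ₀ = x - 1`, `μ₁ = p - 2 - x`, and
`μ_j = p - 1 - x` for `2 ≤ j ≤ f - 1`.  Indices are taken in `ZMod f`. -/
noncomputable def muTuple (p f : ℕ) : ZMod f → Polynomial ℤ := fun j =>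
  if j = 0 then X - 1
  else if j = 1 then C ((p : ℤ) - 2) - X
  else C ((p : ℤ) - 1) - X

/-- `muIter p f k = μ^{(k)} = g^{k-1}μ ∘ ⋯ ∘ gμ ∘ μ`, with `μ^{(0)} = (x, …, x)`;
composition and the cyclic shift `g` (`(gλ)_j = λ_{j+1}`) are componentwise. -/
noncomputable def muIter (p f : ℕ) : ℕ → ZMod f → Polynomial ℤ
  | 0 => fun _ => X
  | k + 1 => fun j => (muTuple p f (j + (k : ZMod f))).comp (muIter p f k j)

/-- `msign p f k = m^{(k)} ∈ (ℤ/2)^f`: the `j`-th entry is `0` iff the leading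
coefficient of `μ^{(k)}_j` is `+1`. -/
noncomputable def msign (p f k : ℕ) (j : ZMod f) : ZMod 2 :=
  if (muIter p f k j).coeff 1 = 1 then 0 else 1

/-- `l = f` if `f` is odd and `l = 2f` if `f` is even. -/
def cycLen (f : ℕ) : ℕ := if Odd f then f else 2 * f

def scnt (f k : ℕ) (j : ZMod f) : ℕ :=
  ((Finset.range k).filter (fun t : ℕ => j + (t : ZMod f) ≠ 0)).card

lemma scnt_succ (f k : ℕ) (j : ZMod f) :
    scnt f (k+1) j = scnt f k j + (if j + (k : ZMod f) ≠ 0 then 1 else 0) := by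
  unfold scnt
  rw [Finset.range_add_one, Finset.filter_insert]
  split
  · rw [Finset.card_insert_of_notMem (by simp)]
  · simp

lemma coeff_one_muIter (p f : ℕ) (k : ℕ) (j : ZMod f) :
    (muIter p f k j).coeff 1 = (-1) ^ (scnt f k j) := by
  induction k with
  | zero => simp [muIter, scnt]
  | succ k ih =>
    rw [scnt_succ]
    show ((muTuple p f (j + (k : ZMod f))).comp (muIter p f k j)).coeff 1 = _
    by_cases h : j + (k : ZMod f) = 0
    · rw [show muTuple p f (j + (k : ZMod f)) = X - 1 by rw [muTuple, if_pos h]]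
      simp [coeff_one, ih, h]
    · have hc : ∃ a : ℤ, (muTuple p f (j + (k : ZMod f))).comp (muIter p f k j)
          = C a - muIter p f k j := by
        unfold muTuple
        rw [if_neg h]
        split
        · exact ⟨(p:ℤ) - 2, by simp [sub_comp]⟩
        · exact ⟨(p:ℤ) - 1, by simp [sub_comp]⟩
      obtain ⟨a, hc⟩ := hc
      rw [hc, coeff_sub, coeff_C, ih, if_neg one_ne_zero, if_pos h, pow_succ]
      ring

lemma msign_eq (p f k : ℕ) (j : ZMod f) :
    msign p f k j = if Even (scnt f k j) then 0 else 1 := by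
  rw [msign]
  simp only [coeff_one_muIter]
  by_cases h : Even (scnt f k j)
  · rw [if_pos h, if_pos (h.neg_one_pow)]
  · rw [if_neg h, if_neg]
    rw [neg_one_pow_eq_one_iff_even (R := ℤ) (by norm_num)]
    exact h

lemma scnt_add (f a b : ℕ) (j : ZMod f) :
    scnt f (a + b) j = scnt f a j + scnt f b (j + (a : ZMod f)) := by
  unfold scnt
  rw [Finset.range_add, Finset.filter_union, Finset.card_union_of_disjoint, Finset.filter_map,
    Finset.card_map]
  · congr 1
    rw [Finset.filter_congr (q := fun t : ℕ => j + (a:ZMod f) + (t : ZMod f) ≠ 0)]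
    intro t _
    simp [addLeftEmbedding, add_assoc]
  · apply Finset.disjoint_filter_filter
    simp only [Finset.disjoint_left, Finset.mem_range, Finset.mem_map, addLeftEmbedding]
    rintro x hx ⟨y, _, rfl⟩
    simp only [Function.Embedding.coeFn_mk] at hx
    omega

lemma mem_iff_key (f k : ℕ) [NeZero f] (hk : k ≤ 2*f) (j : ZMod f) (t : ℕ) (ht : t < k) :
    (j + (t : ZMod f) = 0) ↔ (t = (-j).val ∨ t = (-j).val + f) := by
  have hf : 0 < f := Nat.pos_of_ne_zero (NeZero.ne f)
  set r := (-j).val with hrdef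
  have hrlt : r < f := ZMod.val_lt _
  have h1 : (j + (t : ZMod f) = 0) ↔ (t : ZMod f) = ((r : ℕ) : ZMod f) := by
    rw [ZMod.natCast_zmod_val, add_comm, add_eq_zero_iff_eq_neg]
  rw [h1, ZMod.natCast_eq_natCast_iff]
  unfold Nat.ModEq
  rw [Nat.mod_eq_of_lt hrlt]
  constructor
  · intro hmod
    have hdm := Nat.div_add_mod t f
    have h2 : t / f < 2 := Nat.div_lt_of_lt_mul (by omega)
    generalize hs : t % f = s at hmod hdm
    generalize hq : t / f = q at h2 hdm
    have hq01 : q = 0 ∨ q = 1 := by omega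
    rcases hq01 with rfl | rfl
    · left; omega
    · right; omega
  · rintro (rfl | rfl)
    · exact Nat.mod_eq_of_lt hrlt
    · rw [Nat.add_mod_right]; exact Nat.mod_eq_of_lt hrlt

lemma scnt_formula (f k : ℕ) [NeZero f] (hk : k ≤ 2*f) (j : ZMod f) :
    scnt f k j + ((if (-j).val < k then 1 else 0) + (if (-j).val + f < k then 1 else 0)) = k := by
  have hf : 0 < f := Nat.pos_of_ne_zero (NeZero.ne f)
  set r := (-j).val with hrdef
  have hrlt : r < f := ZMod.val_lt _
  have hsplit := Finset.card_filter_add_card_filter_not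
    (s := Finset.range k) (p := fun t : ℕ => j + (t : ZMod f) = 0)
  rw [Finset.card_range] at hsplit
  have hset : (Finset.range k).filter (fun t : ℕ => j + (t : ZMod f) = 0)
      = ({r, r + f} : Finset ℕ).filter (fun t => t < k) := by
    ext t
    simp only [Finset.mem_filter, Finset.mem_range, Finset.mem_insert, Finset.mem_singleton]
    constructor
    · intro ⟨ht, hz⟩
      exact ⟨(mem_iff_key f k hk j t ht).mp hz, ht⟩
    · intro ⟨hor, ht⟩
      exact ⟨ht, (mem_iff_key f k hk j t ht).mpr hor⟩
  have hcard : (({r, r + f} : Finset ℕ).filter (fun t => t < k)).card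
      = (if r < k then 1 else 0) + (if r + f < k then 1 else 0) := by
    by_cases h2 : r + f < k
    · have h1 : r < k := by omega
      rw [if_pos h1, if_pos h2, Finset.filter_insert, if_pos h1, Finset.filter_singleton,
        if_pos h2, Finset.card_insert_of_notMem (by simp; omega), Finset.card_singleton]
    · by_cases h1 : r < k
      · rw [if_pos h1, if_neg h2, Finset.filter_insert, if_pos h1, Finset.filter_singleton,
          if_neg h2]
        simp
      · rw [if_neg h1, if_neg h2, Finset.filter_insert, if_neg h1, Finset.filter_singleton,
          if_neg h2]
        simp
  have hscnt : scnt f k j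
      = ((Finset.range k).filter (fun t : ℕ => ¬ (j + (t : ZMod f) = 0))).card := rfl
  rw [hset, hcard] at hsplit
  rw [hscnt]
  omega

noncomputable def Ncard (p f k : ℕ) [NeZero f] : ℕ :=
  (Finset.univ.filter fun j : ZMod f => msign p f k j = 1).card

lemma Ncard_eq (p f k : ℕ) [NeZero f] :
    Ncard p f k
      = ((Finset.range f).filter fun r : ℕ => msign p f k (-(r : ZMod f)) = 1).card := by
  rw [Ncard]
  apply Finset.card_nbij' (i := fun j : ZMod f => (-j).val) (j := fun r : ℕ => -(r : ZMod f))
  · intro a ha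
    simp only [Finset.mem_coe, Finset.mem_filter, Finset.mem_univ, true_and] at ha
    simp only [Finset.mem_coe, Finset.mem_filter, Finset.mem_range]
    refine ⟨ZMod.val_lt _, ?_⟩
    rw [ZMod.natCast_zmod_val, neg_neg]
    exact ha
  · intro r hr
    simp only [Finset.mem_coe, Finset.mem_filter, Finset.mem_range] at hr
    simp only [Finset.mem_coe, Finset.mem_filter, Finset.mem_univ, true_and]
    exact hr.2
  · intro a _
    show -(((-a).val : ℕ) : ZMod f) = a
    rw [ZMod.natCast_zmod_val, neg_neg]
  · intro r hr
    simp only [Finset.mem_coe, Finset.mem_filter, Finset.mem_range] at hr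
    simp only [neg_neg]
    exact ZMod.val_cast_of_lt hr.1

lemma msign_one_iff (p f k : ℕ) [NeZero f] (hk : k ≤ 2*f) (r : ℕ) (hr : r < f) :
    (msign p f k (-(r : ZMod f)) = 1)
      ↔ (k + ((if r < k then 1 else 0) + (if r + f < k then 1 else 0))) % 2 = 1 := by
  rw [msign_eq]
  have hval : (-(-(r : ZMod f))).val = r := by rw [neg_neg]; exact ZMod.val_cast_of_lt hr
  have heq := scnt_formula f k hk (-(r : ZMod f))
  rw [hval] at heq
  by_cases he : Even (scnt f k (-(r : ZMod f)))
  · rw [if_pos he]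
    rw [Nat.even_iff] at he
    constructor
    · intro habs; exact absurd habs (by decide)
    · intro hmod; exfalso; omega
  · rw [if_neg he]
    rw [Nat.not_even_iff] at he
    constructor
    · intro _; omega
    · intro _; rfl

lemma card_range_filter_lt (f a : ℕ) (h : a ≤ f) :
    ((Finset.range f).filter (fun r => r < a)).card = a := by
  have : (Finset.range f).filter (fun r => r < a) = Finset.range a := by
    ext x; simp [Finset.mem_range]; omega
  rw [this, Finset.card_range]

lemma card_range_filter_not_lt (f a : ℕ) (h : a ≤ f) :
    ((Finset.range f).filter (fun r => ¬ r < a)).card = f - a := by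
  have h2 := Finset.card_filter_add_card_filter_not
    (s := Finset.range f) (p := fun r : ℕ => r < a)
  rw [Finset.card_range, card_range_filter_lt f a h] at h2
  omega

lemma Ncard_eq_val (p f k : ℕ) [NeZero f] (hk : k ≤ 2*f) :
    Ncard p f k = if k ≤ f then (if Even k then k else f - k)
                  else (if Even k then 2*f - k else k - f) := by
  rw [Ncard_eq]
  by_cases hlow : k ≤ f
  · rw [if_pos hlow]
    by_cases he : Even k
    · rw [if_pos he]
      rw [Finset.filter_congr (q := fun r : ℕ => r < k)
        (fun r hr => by
          rw [Finset.mem_range] at hr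
          rw [msign_one_iff p f k (by omega) r hr]
          rw [Nat.even_iff] at he
          by_cases hrk : r < k <;> simp [hrk, show ¬ (r + f < k) by omega] <;> omega)]
      exact card_range_filter_lt f k hlow
    · rw [if_neg he]
      rw [Finset.filter_congr (q := fun r : ℕ => ¬ r < k)
        (fun r hr => by
          rw [Finset.mem_range] at hr
          rw [msign_one_iff p f k (by omega) r hr]
          rw [Nat.not_even_iff] at he
          by_cases hrk : r < k <;> simp [hrk, show ¬ (r + f < k) by omega] <;> omega)]
      exact card_range_filter_not_lt f k hlow
  · rw [if_neg hlow]
    by_cases he : Even k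
    · rw [if_pos he]
      rw [Finset.filter_congr (q := fun r : ℕ => ¬ r < k - f)
        (fun r hr => by
          rw [Finset.mem_range] at hr
          rw [msign_one_iff p f k hk r hr]
          rw [Nat.even_iff] at he
          by_cases hrk : r + f < k <;>
            simp [hrk, show r < k by omega, show (r < k - f) ↔ (r + f < k) by omega] <;> omega)]
      rw [card_range_filter_not_lt f (k - f) (by omega)]
      omega
    · rw [if_neg he]
      rw [Finset.filter_congr (q := fun r : ℕ => r < k - f)
        (fun r hr => by
          rw [Finset.mem_range] at hr
          rw [msign_one_iff p f k hk r hr]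
          rw [Nat.not_even_iff] at he
          by_cases hrk : r + f < k <;>
            simp [hrk, show r < k by omega, show (r < k - f) ↔ (r + f < k) by omega] <;> omega)]
      exact card_range_filter_lt f (k - f) (by omega)

lemma Ncard_shift (p f k₁ k₂ i : ℕ) [NeZero f]
    (h : ∀ j : ZMod f, msign p f k₁ j = msign p f k₂ (j + (i : ZMod f))) :
    Ncard p f k₁ = Ncard p f k₂ := by
  rw [Ncard, Ncard]
  apply Finset.card_nbij' (i := fun j : ZMod f => j + (i : ZMod f))
    (j := fun j : ZMod f => j - (i : ZMod f))
  · intro a ha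
    simp only [Finset.mem_coe, Finset.mem_filter, Finset.mem_univ, true_and] at *
    rw [← h a]; exact ha
  · intro a ha
    simp only [Finset.mem_coe, Finset.mem_filter, Finset.mem_univ, true_and] at *
    rw [h (a - (i : ZMod f)), sub_add_cancel]; exact ha
  · intro a _; exact add_sub_cancel_right a _
  · intro a _; exact sub_add_cancel a _

lemma cycLen_le (f : ℕ) : cycLen f ≤ 2 * f ∧ f ≤ cycLen f := by
  unfold cycLen; split <;> omega

lemma even_scnt_cycLen (f : ℕ) [NeZero f] (j : ZMod f) :
    Even (scnt f (cycLen f) j) := by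
  have h := scnt_formula f (cycLen f) (cycLen_le f).1 j
  have hr : (-j).val < f := ZMod.val_lt _
  rw [Nat.even_iff]
  unfold cycLen at *
  by_cases ho : Odd f
  · rw [if_pos ho] at h ⊢
    rw [if_pos hr, if_neg (by omega)] at h
    rw [Nat.odd_iff] at ho
    omega
  · rw [if_neg ho] at h ⊢
    rw [if_pos (by omega), if_pos (by omega)] at h
    rw [Nat.not_odd_iff] at ho
    omega

lemma msign_shift_compl (p f k : ℕ) [NeZero f] (hf : 1 < f)
    (hk : 1 ≤ k) (hk' : k ≤ cycLen f - 1) (j : ZMod f) :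
    msign p f k j = msign p f (cycLen f - k) (j + (k : ZMod f)) := by
  have hlf := cycLen_le f
  have hll : k + (cycLen f - k) = cycLen f := by omega
  have hadd := scnt_add f k (cycLen f - k) j
  rw [hll] at hadd
  have hev := even_scnt_cycLen f j
  rw [Nat.even_iff] at hev
  rw [msign_eq, msign_eq]
  have h1 : Even (scnt f k j) ↔ Even (scnt f (cycLen f - k) (j + (k : ZMod f))) := by
    rw [Nat.even_iff, Nat.even_iff]
    constructor <;> intro <;> omega
  by_cases h : Even (scnt f k j)
  · rw [if_pos h, if_pos (h1.mp h)]
  · rw [if_neg h, if_neg (fun hc => h (h1.mpr hc))]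


/-- Lemma 2.1(2): for `1 ≤ k₁, k₂ ≤ l - 1` with `k₁ ≠ k₂`, the tuples `m^{(k₁)}` and
`m^{(k₂)}` are cyclic permutations of each other iff `k₂ = l - k₁`. -/
theorem msign_cyclic_perm_iff (p f : ℕ) (hp : p.Prime) (hp3 : 3 < p) (hf : 1 < f)
    (k₁ k₂ : ℕ) (hk₁ : 1 ≤ k₁) (hk₁' : k₁ ≤ cycLen f - 1)
    (hk₂ : 1 ≤ k₂) (hk₂' : k₂ ≤ cycLen f - 1) (hne : k₁ ≠ k₂) :
    (∃ i : ℕ, ∀ j : ZMod f, msign p f k₁ j = msign p f k₂ (j + (i : ZMod f))) ↔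
      k₂ = cycLen f - k₁ := by
  haveI : NeZero f := ⟨by omega⟩
  have hlf := cycLen_le f
  constructor
  · rintro ⟨i, hi⟩
    have hN := Ncard_shift p f k₁ k₂ i hi
    rw [Ncard_eq_val p f k₁ (by omega), Ncard_eq_val p f k₂ (by omega)] at hN
    simp only [Nat.even_iff] at hN
    unfold cycLen at *
    by_cases ho : Odd f
    · rw [if_pos ho] at hk₁' hk₂' ⊢
      rw [Nat.odd_iff] at ho
      split_ifs at hN <;> omega
    · rw [if_neg ho] at hk₁' hk₂' ⊢
      rw [Nat.not_odd_iff] at ho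
      split_ifs at hN <;> omega
  · intro h
    refine ⟨k₁, fun j => ?_⟩
    rw [h]
    exact msign_shift_compl p f k₁ hf hk₁ hk₁' j
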